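/- Let p be a prime, t₀ ∈ ℤ_p, and t : {1,…,m} → ℤ_p, and suppose the map (γ₁,…,γ_m) ∈ {0,1,2}^m ↦ 2t₀ + Σᵢ γᵢtᵢ ∈ ℤ_p is injective. Then the number of ordered quadruples (S₁, S₂, S₃, S₄) of subsets of {1,…,m} satisfying (t₀ + Σ_{i∈S₁} tᵢ) + (t₀ + Σ_{i∈S₂} tᵢ) = (t₀ + Σ_{i∈S₃} tᵢ) + (t₀ + Σ_{i∈S₄} tᵢ) in ℤ_p equals Σ_{j=0}^{m} C(m, j) · 2^{m+j} = 6^m. Equivalently, the additive energy E(A, A) of the set A = { t₀ + Σ_{i∈S} tᵢ : S ⊆ {1,…,m} } equals 6^m. -/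

import Mathlib

open Finset

/-- Additive energy `E(A,A) = #{(a,b,a',b') ∈ A⁴ : a + b = a' + b'}`. -/
def addEnergy (p : ℕ) (A : Finset (ZMod p)) : ℕ :=
  ((A ×ˢ A ×ˢ A ×ˢ A).filter
    (fun x => x.1 + x.2.1 = x.2.2.1 + x.2.2.2)).card

theorem quadruple_count_eq (p m : ℕ) (hp : p.Prime)
    (t₀ : ZMod p) (t : Fin m → ZMod p)
    (hB : Function.Injective (fun γ : Fin m → Fin 3 =>
      2 * t₀ + ∑ i, ((γ i : ℕ) : ZMod p) * t i)) :
    ((Finset.univ :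
        Finset ((Finset (Fin m) × Finset (Fin m)) × Finset (Fin m) × Finset (Fin m))).filter
        (fun S => (t₀ + ∑ i ∈ S.1.1, t i) + (t₀ + ∑ i ∈ S.1.2, t i)
          = (t₀ + ∑ i ∈ S.2.1, t i) + (t₀ + ∑ i ∈ S.2.2, t i))).card
      = ∑ j ∈ Finset.range (m + 1), m.choose j * 2 ^ (m + j)
    ∧ ((Finset.univ :
        Finset ((Finset (Fin m) × Finset (Fin m)) × Finset (Fin m) × Finset (Fin m))).filter
        (fun S => (t₀ + ∑ i ∈ S.1.1, t i) + (t₀ + ∑ i ∈ S.1.2, t i)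
          = (t₀ + ∑ i ∈ S.2.1, t i) + (t₀ + ∑ i ∈ S.2.2, t i))).card
      = 6 ^ m
    ∧ addEnergy p (Finset.image (fun S : Finset (Fin m) => t₀ + ∑ i ∈ S, t i)
        Finset.univ) = 6 ^ m := by
  classical
  set c : Finset (Fin m) → Fin m → ℕ := fun S i => if i ∈ S then 1 else 0 with hc
  have hclt : ∀ (S S' : Finset (Fin m)) (i : Fin m), c S i + c S' i < 3 := by
    intro S S' i; simp only [hc]; split_ifs <;> norm_num
  have hsum1 : ∀ S : Finset (Fin m), ∑ i, ((c S i : ℕ) : ZMod p) * t i = ∑ i ∈ S, t i := by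
    intro S
    simp [hc, apply_ite (fun n : ℕ => (n : ZMod p)), ite_mul, Finset.sum_ite_mem]
  set γ : (Finset (Fin m) × Finset (Fin m)) → Fin m → Fin 3 :=
    fun P i => ⟨c P.1 i + c P.2 i, hclt _ _ i⟩ with hγ
  have hsum2 : ∀ P : Finset (Fin m) × Finset (Fin m),
      (t₀ + ∑ i ∈ P.1, t i) + (t₀ + ∑ i ∈ P.2, t i)
        = 2 * t₀ + ∑ i, ((γ P i : ℕ) : ZMod p) * t i := by
    intro P
    have h : ∑ i, ((γ P i : ℕ) : ZMod p) * t i = (∑ i ∈ P.1, t i) + ∑ i ∈ P.2, t i := by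
      rw [← hsum1 P.1, ← hsum1 P.2, ← Finset.sum_add_distrib]
      refine Finset.sum_congr rfl fun i _ => ?_
      show ((c P.1 i + c P.2 i : ℕ) : ZMod p) * t i = _
      push_cast; ring
    rw [h]; ring
  have key : ∀ S : (Finset (Fin m) × Finset (Fin m)) × Finset (Fin m) × Finset (Fin m),
      ((t₀ + ∑ i ∈ S.1.1, t i) + (t₀ + ∑ i ∈ S.1.2, t i)
          = (t₀ + ∑ i ∈ S.2.1, t i) + (t₀ + ∑ i ∈ S.2.2, t i))
      ↔ ∀ i, c S.1.1 i + c S.1.2 i = c S.2.1 i + c S.2.2 i := by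
    intro S
    constructor
    · intro h
      have h2 : γ S.1 = γ S.2 := by
        apply hB
        show 2 * t₀ + _ = 2 * t₀ + _
        rw [← hsum2 S.1, ← hsum2 S.2]
        exact h
      intro i
      have := congrFun h2 i
      simpa [hγ, Fin.ext_iff] using this
    · intro h
      rw [hsum2 S.1, hsum2 S.2]
      have h2 : γ S.1 = γ S.2 := by
        funext i; exact Fin.ext (h i)
      rw [h2]
  -- count via equivalence
  have hcount : ((Finset.univ :
        Finset ((Finset (Fin m) × Finset (Fin m)) × Finset (Fin m) × Finset (Fin m))).filter
        (fun S => (t₀ + ∑ i ∈ S.1.1, t i) + (t₀ + ∑ i ∈ S.1.2, t i)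
          = (t₀ + ∑ i ∈ S.2.1, t i) + (t₀ + ∑ i ∈ S.2.2, t i))).card = 6 ^ m := by
    rw [← Fintype.card_subtype]
    let fb : Finset (Fin m) ≃ (Fin m → Bool) :=
      { toFun := fun S i => decide (i ∈ S)
        invFun := fun f => univ.filter (fun i => f i)
        left_inv := fun S => by ext i; simp
        right_inv := fun f => by funext i; simp }
    let fb2 : Finset (Fin m) × Finset (Fin m) ≃ (Fin m → Bool × Bool) :=
      (fb.prodCongr fb).trans (Equiv.arrowProdEquivProdArrow (Fin m) (fun _ => Bool) (fun _ => Bool)).symm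
    let E : ((Finset (Fin m) × Finset (Fin m)) × Finset (Fin m) × Finset (Fin m)) ≃
        (Fin m → (Bool × Bool) × Bool × Bool) :=
      (fb2.prodCongr fb2).trans
        (Equiv.arrowProdEquivProdArrow (Fin m) (fun _ => Bool × Bool) (fun _ => Bool × Bool)).symm
    have hE : ∀ S i, E S i = ((decide (i ∈ S.1.1), decide (i ∈ S.1.2)),
        decide (i ∈ S.2.1), decide (i ∈ S.2.2)) := by
      intro S i
      rfl
    have hcb : ∀ (S : Finset (Fin m)) (i : Fin m), c S i = (decide (i ∈ S)).toNat := by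
      intro S i; by_cases h : i ∈ S <;> simp [hc, h]
    let Qp : (Bool × Bool) × Bool × Bool → Prop :=
      fun q => q.1.1.toNat + q.1.2.toNat = q.2.1.toNat + q.2.2.toNat
    have e1 : {S : (Finset (Fin m) × Finset (Fin m)) × Finset (Fin m) × Finset (Fin m) //
          (t₀ + ∑ i ∈ S.1.1, t i) + (t₀ + ∑ i ∈ S.1.2, t i)
            = (t₀ + ∑ i ∈ S.2.1, t i) + (t₀ + ∑ i ∈ S.2.2, t i)}
        ≃ (∀ _ : Fin m, {q : (Bool × Bool) × Bool × Bool // Qp q}) := by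
      refine (E.subtypeEquiv ?_).trans (Equiv.subtypePiEquivPi)
      intro S
      rw [key S]
      constructor
      · intro h i; simp only [hE, Qp]; rw [← hcb, ← hcb, ← hcb, ← hcb]; exact h i
      · intro h i
        have := h i
        simp only [hE, Qp] at this
        rw [← hcb, ← hcb, ← hcb, ← hcb] at this
        exact this
    rw [Fintype.card_congr e1, Fintype.card_pi]
    have h6 : Fintype.card {q : (Bool × Bool) × Bool × Bool // Qp q} = 6 := by decide
    simp [h6]
  refine ⟨?_, hcount, ?_⟩
  · rw [hcount]
    have h3 : ∑ j ∈ Finset.range (m + 1), m.choose j * 2 ^ j = 3 ^ m := by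
      have := add_pow 2 1 m (R := ℕ)
      simp only [one_pow, mul_one] at this
      norm_num at this
      rw [this]
      exact Finset.sum_congr rfl fun j _ => by ring
    calc (6 : ℕ) ^ m = 2 ^ m * 3 ^ m := by rw [← mul_pow]; norm_num
      _ = ∑ j ∈ Finset.range (m + 1), m.choose j * 2 ^ (m + j) := by
          rw [← h3, Finset.mul_sum]
          exact Finset.sum_congr rfl fun j _ => by rw [pow_add]; ring
  · -- additive energy
    set a : Finset (Fin m) → ZMod p := fun S => t₀ + ∑ i ∈ S, t i with ha
    have ha_inj : Function.Injective a := by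
      intro S S' h
      have h2 := (key ((S, S), (S', S'))).mp (by simp only [ha] at h; simp [h])
      ext i
      have := h2 i
      simp only [hc] at this
      by_cases h1 : i ∈ S <;> by_cases h2' : i ∈ S' <;> simp [h1, h2'] at this ⊢
    rw [← hcount]
    unfold _root_.addEnergy
    rw [eq_comm]
    apply Finset.card_bij (fun S _ => (a S.1.1, a S.1.2, a S.2.1, a S.2.2))
    · intro S hS
      simp only [Finset.mem_filter, Finset.mem_product] at hS ⊢
      refine ⟨⟨?_, ?_, ?_, ?_⟩, hS.2⟩ <;> exact Finset.mem_image_of_mem a (Finset.mem_univ _)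
    · intro S₁ h₁ S₂ h₂ h
      simp only [Prod.mk.injEq] at h
      obtain ⟨e1, e2, e3, e4⟩ := h
      exact Prod.ext (Prod.ext (ha_inj e1) (ha_inj e2)) (Prod.ext (ha_inj e3) (ha_inj e4))
    · intro x hx
      simp only [Finset.mem_filter, Finset.mem_product, Finset.mem_image] at hx
      obtain ⟨⟨⟨S₁, -, h1⟩, ⟨S₂, -, h2⟩, ⟨S₃, -, h3⟩, ⟨S₄, -, h4⟩⟩, hcond⟩ := hx
      refine ⟨((S₁, S₂), (S₃, S₄)), ?_, ?_⟩
      · simp only [Finset.mem_filter, Finset.mem_univ, true_and]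
        show a S₁ + a S₂ = a S₃ + a S₄
        rw [h1, h2, h3, h4]; exact hcond
      · simp [h1, h2, h3, h4]
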